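/- Let f be a norm on ℝ^p, let (a, b) be a linear classifier with a ≠ 0, let x_F ∈ ℝ^p satisfy ⟪a, x_F⟫ < b, and let x_CF be an optimal counterfactual of x_F under f with x_CF ≠ x_F. Assume f is differentiable at x_CF − x_F with gradient g (i.e., HasGradientAt f g (x_CF − x_F)). Define â := g and b̂ := ⟪g, x_CF⟫. Then there exists λ ∈ ℝ with λ ≠ 0 such that â = λ • a and b̂ = λ · b; in other words, a single counterfactual query under a differentiable norm recovers the hyperplane of the classifier up to nonzero scaling. -/

import Mathlib

open RealInnerProductSpace

noncomputable section

/-- `f` is a norm on `EuclideanSpace ℝ (Fin p)`. -/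
def IsNormE {p : ℕ} (f : EuclideanSpace ℝ (Fin p) → ℝ) : Prop :=
  (∀ x, f x = 0 ↔ x = 0) ∧ (∀ (c : ℝ) (x : EuclideanSpace ℝ (Fin p)), f (c • x) = |c| * f x) ∧
    (∀ x y, f (x + y) ≤ f x + f y)

/-- `xCF` is an optimal counterfactual of the factual `xF` (classified 'No') under norm `f`. -/
def IsOptCFE {p : ℕ} (a : EuclideanSpace ℝ (Fin p)) (b : ℝ)
    (f : EuclideanSpace ℝ (Fin p) → ℝ) (xF xCF : EuclideanSpace ℝ (Fin p)) : Prop :=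
  b ≤ ⟪a, xCF⟫ ∧ ∀ z : EuclideanSpace ℝ (Fin p), b ≤ ⟪a, z⟫ → f (xCF - xF) ≤ f (z - xF)

/-- A single counterfactual query under a differentiable norm recovers the hyperplane
up to nonzero scaling: `â = ∇f(x_CF − x_F)` and `b̂ = ⟪â, x_CF⟫` satisfy
`â = λ • a`, `b̂ = λ * b` for some `λ ≠ 0`. -/
theorem cf_extraction_differentiable {p : ℕ} (hp : 1 ≤ p)
    (f : EuclideanSpace ℝ (Fin p) → ℝ) (hf : IsNormE f)
    (a : EuclideanSpace ℝ (Fin p)) (ha : a ≠ 0) (b : ℝ)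
    (xF xCF : EuclideanSpace ℝ (Fin p)) (hxF : ⟪a, xF⟫ < b)
    (hopt : IsOptCFE a b f xF xCF) (hne : xCF ≠ xF)
    (g : EuclideanSpace ℝ (Fin p)) (hgrad : HasGradientAt f g (xCF - xF)) :
    ∃ l : ℝ, l ≠ 0 ∧ g = l • a ∧ ⟪g, xCF⟫ = l * b := by
  obtain ⟨hf0, hfs, hft⟩ := hf
  set d := xCF - xF with hd
  have hdne : d ≠ 0 := sub_ne_zero.mpr hne
  have hfd_ne : f d ≠ 0 := fun h => hdne ((hf0 d).mp h)
  have hfd_pos : 0 < f d := by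
    have h1 : f (-d) = f d := by
      have := hfs (-1) d; simpa using this
    have h2 : (0:ℝ) ≤ f d + f (-d) := by
      have h3 := hft d (-d)
      have h4 : f 0 = 0 := (hf0 0).mpr rfl
      simpa [h4] using h3
    rcases lt_or_eq_of_le (by linarith : (0:ℝ) ≤ f d) with h | h
    · exact h
    · exact absurd h.symm hfd_ne
  -- the counterfactual lies on the boundary
  have hb : ⟪a, xCF⟫ = b := by
    by_contra hlt
    have hgt : b < ⟪a, xCF⟫ := lt_of_le_of_ne hopt.1 (Ne.symm hlt)
    set t := (b - ⟪a, xF⟫) / (⟪a, xCF⟫ - ⟪a, xF⟫) with ht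
    have hden : 0 < ⟪a, xCF⟫ - ⟪a, xF⟫ := by linarith
    have ht0 : 0 < t := div_pos (by linarith) hden
    have ht1 : t < 1 := (div_lt_one hden).mpr (by linarith)
    have hz : ⟪a, xF + t • d⟫ = b := by
      have e : ⟪a, xF + t • d⟫ = ⟪a, xF⟫ + t * (⟪a, xCF⟫ - ⟪a, xF⟫) := by
        rw [hd, inner_add_right, real_inner_smul_right, inner_sub_right]
      rw [e, ht, div_mul_cancel₀ _ hden.ne']
      ring
    have hle := hopt.2 (xF + t • d) (le_of_eq hz.symm)
    rw [add_sub_cancel_left, hfs t d, abs_of_pos ht0, ← hd] at hle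
    nlinarith
  -- directional derivative along any v is ⟪g, v⟫
  have hderiv : ∀ v : EuclideanSpace ℝ (Fin p),
      HasDerivAt (fun t : ℝ => f (d + t • v)) ⟪g, v⟫ 0 := by
    intro v
    have hline : HasDerivAt (fun t : ℝ => d + t • v) v 0 := by
      simpa using ((hasDerivAt_id (0:ℝ)).smul_const v).const_add d
    have hF := hgrad.hasFDerivAt
    have hF' : HasFDerivAt f ((InnerProductSpace.toDual ℝ _) g)
        ((fun t : ℝ => d + t • v) 0) := by simpa [hd] using hF
    have := hF'.comp_hasDerivAt 0 hline
    simp [InnerProductSpace.toDual_apply_apply] at this; exact this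
  -- tangential directions give zero derivative
  have htan : ∀ v : EuclideanSpace ℝ (Fin p), ⟪a, v⟫ = 0 → ⟪g, v⟫ = 0 := by
    intro v hv
    have hmin : IsLocalMin (fun t : ℝ => f (d + t • v)) 0 := by
      apply Filter.Eventually.of_forall
      intro t
      have hz : ⟪a, xCF + t • v⟫ = b := by
        rw [inner_add_right, real_inner_smul_right, hv, hb]; ring
      have hle := hopt.2 (xCF + t • v) (le_of_eq hz.symm)
      have e1 : xCF + t • v - xF = d + t • v := by rw [hd]; abel
      simpa [e1, ← hd] using hle
    exact hmin.hasDerivAt_eq_zero (hderiv v)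
  -- radial direction: ⟪g, d⟫ = f d > 0
  have hgd : ⟪g, d⟫ = f d := by
    have h2 : HasDerivAt (fun t : ℝ => (1 + t) * f d) (f d) 0 := by
      simpa using ((hasDerivAt_id (0:ℝ)).const_add 1).mul_const (f d)
    have heq : (fun t : ℝ => (1 + t) * f d) =ᶠ[nhds (0:ℝ)]
        (fun t : ℝ => f (d + t • d)) := by
      filter_upwards [eventually_gt_nhds (by norm_num : (-1:ℝ) < 0)] with t ht
      have e : d + t • d = (1 + t) • d := by rw [add_smul, one_smul]
      rw [e, hfs, abs_of_pos (by linarith)]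
    have h3 : HasDerivAt (fun t : ℝ => f (d + t • d)) (f d) 0 :=
      h2.congr_of_eventuallyEq heq.symm
    exact (hderiv d).unique h3
  have hgne : g ≠ 0 := by
    intro h
    rw [h] at hgd
    simp at hgd
    exact hfd_ne hgd.symm
  -- decompose g along a
  have hna : ‖a‖ ≠ 0 := norm_ne_zero_iff.mpr ha
  set c := ⟪a, g⟫ / ‖a‖ ^ 2 with hc
  have hw : ⟪a, g - c • a⟫ = 0 := by
    rw [inner_sub_right, real_inner_smul_right, hc, real_inner_self_eq_norm_sq]
    field_simp
    ring
  have h0 : ⟪g, g - c • a⟫ = 0 := htan _ hw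
  have hgca : g = c • a := by
    have hww : ⟪g - c • a, g - c • a⟫ = 0 := by
      rw [inner_sub_left, real_inner_smul_left, h0, hw]; ring
    exact sub_eq_zero.mp (inner_self_eq_zero.mp hww)
  have hcne : c ≠ 0 := by
    intro h
    rw [h, zero_smul] at hgca
    exact hgne hgca
  refine ⟨c, hcne, hgca, ?_⟩
  rw [hgca, real_inner_smul_left, hb]
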